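/- Let G be a Polish group acting continuously on a Polish space V in such a way that every G-orbit is locally closed in V. Let S be a group, ρ : S → G a homomorphism, and let (Y, ν) be a σ-finite standard measure space with ν ≠ 0, equipped with a measurable, measure-class-preserving, ergodic S-action. Suppose φ : Y → V is a measurable map satisfying φ(s·y) = ρ(s)·φ(y) for every s ∈ S and ν-almost every y ∈ Y. Then there exists v ∈ V such that φ(y) ∈ G·v for ν-almost every y ∈ Y. -/

import Mathlib

open MeasureTheory

/-- Let `G` be a Polish group acting continuously on a Polish space `V` with locally closed
orbits, and let `(Y, ν)` be a nonzero σ-finite standard measure space with a measurable,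
measure-class-preserving, ergodic action of a group `S` mapping to `G` by `ρ`. Then every
measurable a.e. equivariant map `φ : Y → V` essentially ranges in a single `G`-orbit. -/
theorem equivariant_map_into_single_orbit
    (G : Type*) [Group G] [TopologicalSpace G] [IsTopologicalGroup G] [PolishSpace G]
    (V : Type*) [TopologicalSpace V] [PolishSpace V]
    [MeasurableSpace V] [BorelSpace V]
    [MulAction G V]
    (hGV : Continuous fun p : G × V => p.1 • p.2)
    (horb : ∀ v : V, IsLocallyClosed (MulAction.orbit G v))
    (S : Type*) [Group S] (ρ : S →* G)
    (Y : Type*) [MeasurableSpace Y] [StandardBorelSpace Y]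
    (ν : Measure Y) [SigmaFinite ν] (hν : ν ≠ 0)
    [MulAction S Y]
    (hmeas : ∀ s : S, Measurable fun y : Y => s • y)
    (hqmp : ∀ s : S, Measure.QuasiMeasurePreserving (fun y : Y => s • y) ν ν)
    (herg : ∀ A : Set Y, MeasurableSet A →
      (∀ s : S, ν (symmDiff ((fun y : Y => s • y) '' A) A) = 0) → ν A = 0 ∨ ν Aᶜ = 0)
    (φ : Y → V) (hφmeas : Measurable φ)
    (hφ : ∀ s : S, ∀ᵐ y ∂ν, φ (s • y) = ρ s • φ y) :
    ∃ v : V, ∀ᵐ y ∂ν, φ y ∈ MulAction.orbit G v := by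
  classical
  -- countable basis of V
  set B := TopologicalSpace.countableBasis V with hBdef
  have hBbasis := TopologicalSpace.isBasis_countableBasis V
  have hBcount := TopologicalSpace.countable_countableBasis V
  -- continuity of each translation
  have hc : ∀ g : G, Continuous (fun x : V => g • x) := fun g =>
    hGV.comp (continuous_const.prodMk continuous_id)
  -- saturation of a set
  let W : Set V → Set V := fun U => ⋃ g : G, (fun x : V => g • x) ⁻¹' U
  have hWmem : ∀ U (x : V), x ∈ W U ↔ ∃ g : G, g • x ∈ U := by
    intro U x; simp [W, Set.mem_iUnion]
  have hWopen : ∀ U, IsOpen U → IsOpen (W U) := fun U hU =>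
    isOpen_iUnion fun g => hU.preimage (hc g)
  have hWinv : ∀ U (h : G) (x : V), h • x ∈ W U ↔ x ∈ W U := by
    intro U h x
    rw [hWmem, hWmem]
    constructor
    · rintro ⟨g, hg⟩; exact ⟨g * h, by rwa [mul_smul]⟩
    · rintro ⟨g, hg⟩; exact ⟨g * h⁻¹, by rwa [mul_smul, inv_smul_smul]⟩
  -- pullbacks
  let A : Set V → Set Y := fun U => φ ⁻¹' (W U)
  have hAmeas : ∀ U ∈ B, MeasurableSet (A U) :=
    fun U hU => ((hWopen U (TopologicalSpace.isOpen_of_mem_countableBasis hU)).measurableSet).preimage hφmeas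
  -- almost invariance of A U
  have hAinv : ∀ U ∈ B, ∀ s : S, ν (symmDiff ((fun y : Y => s • y) '' (A U)) (A U)) = 0 := by
    intro U hU s
    have himg : (fun y : Y => s • y) '' (A U) = (fun y : Y => s⁻¹ • y) ⁻¹' (A U) := by
      ext z
      simp only [Set.mem_image, Set.mem_preimage]
      constructor
      · rintro ⟨u, hu, rfl⟩; simpa [inv_smul_smul] using hu
      · intro h; exact ⟨s⁻¹ • z, h, smul_inv_smul s z⟩
    rw [himg]
    have hae : ν {y | ¬ φ (s⁻¹ • y) = ρ s⁻¹ • φ y} = 0 := by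
      simpa [ae_iff] using hφ s⁻¹
    apply measure_mono_null _ hae
    intro y hy
    simp only [Set.mem_setOf_eq]
    intro heq
    apply absurd hy
    simp only [Set.mem_symmDiff, not_or, not_and, not_not]
    constructor
    · intro h1
      have : φ (s⁻¹ • y) ∈ W U := h1
      rw [heq] at this
      exact (hWinv U (ρ s⁻¹) (φ y)).mp this
    · intro h1
      show φ (s⁻¹ • y) ∈ W U
      rw [heq]
      exact (hWinv U (ρ s⁻¹) (φ y)).mpr h1
  -- ergodicity: dichotomy
  have hdich : ∀ U ∈ B, ν (A U) = 0 ∨ ν ((A U)ᶜ) = 0 := fun U hU =>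
    herg (A U) (hAmeas U hU) (hAinv U hU)
  -- the bad set
  let bad : Set V → Set Y := fun U => if ν (A U) = 0 then A U else (A U)ᶜ
  have hbad : ∀ U ∈ B, ν (bad U) = 0 := by
    intro U hU
    by_cases h : ν (A U) = 0
    · simpa [bad, h] using h
    · have := (hdich U hU).resolve_left h
      simpa [bad, h] using this
  let T : Set Y := ⋃ U ∈ B, bad U
  have hT : ν T = 0 := by
    refine (measure_biUnion_null_iff hBcount).mpr hbad
  let Z : Set Y := Tᶜ
  -- membership pattern on Z
  have hZpattern : ∀ y ∈ Z, ∀ y' ∈ Z, ∀ U ∈ B, (φ y ∈ W U ↔ φ y' ∈ W U) := by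
    intro y hy y' hy' U hU
    have hyU : y ∉ bad U := fun h => hy (Set.mem_biUnion hU h)
    have hy'U : y' ∉ bad U := fun h => hy' (Set.mem_biUnion hU h)
    by_cases h : ν (A U) = 0
    · simp only [bad, if_pos h] at hyU hy'U
      exact iff_of_false hyU hy'U
    · simp only [bad, if_neg h, Set.notMem_compl_iff] at hyU hy'U
      exact iff_of_true hyU hy'U
  -- Z is nonempty
  have hZne : Z.Nonempty := by
    apply nonempty_of_measure_ne_zero (μ := ν)
    intro h0
    apply hν
    have huniv : ν Set.univ = 0 := by
      have : (Set.univ : Set Y) = Z ∪ T := by simp [Z]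
      rw [this]
      exact le_antisymm (le_trans (measure_union_le _ _) (by rw [h0, hT]; simp)) (zero_le)
    exact Measure.measure_univ_eq_zero.mp huniv
  obtain ⟨y₀, hy₀⟩ := hZne
  refine ⟨φ y₀, ?_⟩
  have hZae : ∀ᵐ y ∂ν, y ∈ Z := by
    rw [ae_iff]
    simpa [Z] using hT
  filter_upwards [hZae] with y hy
  -- topological argument: φ y ∈ orbit G (φ y₀)
  set v := φ y₀ with hv
  set w := φ y with hw
  have hiff : ∀ U ∈ B, (w ∈ W U ↔ v ∈ W U) := fun U hU => hZpattern y hy y₀ hy₀ U hU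
  -- the orbits have the same closure
  have hmeet : ∀ (x : V) (U : Set V), (U ∩ MulAction.orbit G x).Nonempty ↔ x ∈ W U := by
    intro x U
    constructor
    · rintro ⟨z, hzU, g, rfl⟩
      exact (hWmem U x).mpr ⟨g, hzU⟩
    · rintro h
      obtain ⟨g, hg⟩ := (hWmem U x).mp h
      exact ⟨g • x, hg, g, rfl⟩
  have hcl : closure (MulAction.orbit G w) = closure (MulAction.orbit G v) := by
    ext x
    rw [hBbasis.mem_closure_iff, hBbasis.mem_closure_iff]
    constructor
    · intro h o ho hxo
      exact (hmeet v o).mpr ((hiff o ho).mp ((hmeet w o).mp (h o ho hxo)))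
    · intro h o ho hxo
      exact (hmeet w o).mpr ((hiff o ho).mpr ((hmeet v o).mp (h o ho hxo)))
  -- use local closedness of orbit of w
  obtain ⟨O, F, hO, hF, hOF⟩ := horb w
  have hwO : w ∈ O := by
    have : w ∈ MulAction.orbit G w := MulAction.mem_orbit_self w
    rw [hOF] at this
    exact this.1
  have hwcl : w ∈ closure (MulAction.orbit G v) := by
    rw [← hcl]
    exact subset_closure (MulAction.mem_orbit_self w)
  obtain ⟨x, hxO, hxorb⟩ := mem_closure_iff.mp hwcl O hO hwO
  have hxF : x ∈ F := by
    have h1 : x ∈ closure (MulAction.orbit G w) := by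
      rw [hcl]; exact subset_closure hxorb
    have h2 : closure (MulAction.orbit G w) ⊆ F :=
      closure_minimal (by rw [hOF]; exact Set.inter_subset_right) hF
    exact h2 h1
  have hxorbw : x ∈ MulAction.orbit G w := by rw [hOF]; exact ⟨hxO, hxF⟩
  -- conclude: w ∈ orbit G v
  obtain ⟨g, hg⟩ := hxorbw
  obtain ⟨h, hh⟩ := hxorb
  refine ⟨g⁻¹ * h, ?_⟩
  show (g⁻¹ * h) • v = w
  rw [mul_smul, show h • v = x from hh, ← show g • w = x from hg, inv_smul_smul]
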